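/- Explicit optimal weights (Proposition 1): for every integer r ≥ 1 and every function f : ℝ → ℝ, p^{2r-1}_{r-1}[f](x_{j-1/2}) = Σ_{k=0}^{r-1} C^{2r-1}_{r-1,k} · p^{r}_{k}[f](x_{j-1/2}), where C^{2r-1}_{r-1,k} = (1/2^{2r-1})·C(2r, 2k+1); moreover each C^{2r-1}_{r-1,k} > 0 and Σ_{k=0}^{r-1} C^{2r-1}_{r-1,k} = 1. -/

import Mathlib

/-- Value at the midpoint `x₀ + (j - 1/2)·h` of the Lagrange interpolant of `f`
at the `a+1` equally spaced nodes `x_{j+b-a}, …, x_{j+b}` where `x_m = x₀ + m·h`. -/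
noncomputable def Pval (h x₀ : ℝ) (j a b : ℤ) (f : ℝ → ℝ) : ℝ :=
  (Lagrange.interpolate (Finset.Icc (j + b - a) (j + b)) (fun m : ℤ => x₀ + (m : ℝ) * h)
    (fun m : ℤ => f (x₀ + (m : ℝ) * h))).eval (x₀ + ((j : ℝ) - 1 / 2) * h)

/-- The classical optimal weights `C^{2r-1}_{r-1,k} = 2^{-(2r-1)} · C(2r, 2k+1)`. -/
noncomputable def Copt (r k : ℕ) : ℝ :=
  (1 / 2 ^ (2 * r - 1)) * (Nat.choose (2 * r) (2 * k + 1) : ℝ)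

open Finset Nat

namespace OW


lemma half_ne (a b : ℕ) : (a:ℝ) - 1/2 - b ≠ 0 := by
  intro hcon
  have h2 : (2*a : ℝ) = 2*b + 1 := by linarith
  have : (2*a : ℕ) = 2*b + 1 := by exact_mod_cast h2
  omega

lemma sign_congr (a b : ℕ) (hab : a % 2 = b % 2) : (-1:ℝ)^a = (-1:ℝ)^b := by
  rw [← Nat.div_add_mod a 2, ← Nat.div_add_mod b 2, pow_add, pow_add, pow_mul, pow_mul]
  norm_num [hab]

lemma negs (a : ℕ) : (-1:ℝ)^a = 1 ∨ (-1:ℝ)^a = -1 := by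
  rcases Nat.even_or_odd a with hp | hp
  · exact Or.inl hp.neg_one_pow
  · exact Or.inr hp.neg_one_pow

lemma prod_odd (m : ℕ) : ∏ q ∈ range m, (2*(q:ℝ)+1) = (2*m)! / (2^m * m !) := by
  induction m with
  | zero => simp
  | succ n ih =>
    rw [prod_range_succ, ih, show 2*(n+1) = (2*n+1)+1 from by ring, Nat.factorial_succ,
      Nat.factorial_succ, Nat.factorial_succ]
    have h1 : (0:ℝ) < (2*n)! := by exact_mod_cast Nat.factorial_pos _
    have h2 : (0:ℝ) < (n)! := by exact_mod_cast Nat.factorial_pos _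
    field_simp
    push_cast
    ring

lemma prod_half_shift (m : ℕ) : ∏ q ∈ range m, ((q:ℝ)+1/2) = (2*m)! / (4^m * m !) := by
  have : ∀ q : ℕ, (q:ℝ)+1/2 = (2*(q:ℝ)+1) * (1/2) := by intro q; ring
  rw [prod_congr rfl fun q _ => this q, prod_mul_distrib, prod_const, prod_odd, card_range]
  have hm : ((m)! : ℝ) ≠ 0 := by exact_mod_cast (Nat.factorial_pos m).ne'
  have hp : (2:ℝ)^m ≠ 0 := by positivity
  rw [show (4:ℝ) = 2*2 by norm_num, mul_pow, one_div, inv_pow, ← div_eq_mul_inv, div_div]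
  ring_nf

lemma prod_pos_half (m : ℕ) : ∏ q ∈ range m, ((m:ℝ) - 1/2 - q) = (2*m)! / (4^m * m !) := by
  rw [← prod_range_reflect]
  rw [← prod_half_shift m]
  refine prod_congr rfl fun q hq => ?_
  rw [mem_range] at hq
  rw [Nat.cast_sub (by omega), Nat.cast_sub (by omega)]
  push_cast
  ring

lemma prod_neg_half (m : ℕ) : ∏ q ∈ range m, (-(1:ℝ)/2 - q) = (-1)^m * ((2*m)! / (4^m * m !)) := by
  have : ∀ q : ℕ, (-(1:ℝ)/2 - q) = (-1) * ((q:ℝ)+1/2) := by intro q; ring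
  rw [prod_congr rfl fun q _ => this q, prod_mul_distrib, prod_const, prod_half_shift,
    card_range]

lemma prod_fall (t : ℕ) : ∏ q ∈ range t, ((t:ℝ)-q) = t ! := by
  rw [← prod_range_reflect]
  have : ∏ q ∈ range t, ((q:ℝ)+1) = t ! := by
    exact_mod_cast congrArg (fun n : ℕ => (n:ℝ)) (Finset.prod_range_add_one_eq_factorial t)
  rw [← this]
  refine prod_congr rfl fun q hq => ?_
  rw [mem_range] at hq
  rw [Nat.cast_sub (by omega), Nat.cast_sub (by omega)]
  push_cast
  ring

lemma prod_fall_neg (m : ℕ) : ∏ q ∈ range m, (-(1:ℝ)-q) = (-1)^m * m ! := by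
  have : ∀ q : ℕ, (-(1:ℝ) - q) = (-1) * ((q:ℝ)+1) := by intro q; ring
  rw [prod_congr rfl fun q _ => this q, prod_mul_distrib, prod_const]
  have : ∏ q ∈ range m, ((q:ℝ)+1) = m ! := by
    exact_mod_cast congrArg (fun n : ℕ => (n:ℝ)) (Finset.prod_range_add_one_eq_factorial m)
  rw [this, card_range]

lemma prod_erase_denom (n t : ℕ) (ht : t < n) :
    ∏ q ∈ (range n).erase t, ((t:ℝ) - q) = (-1)^(n-1-t) * t ! * (n-1-t)! := by
  have hsplit : (range n).erase t = range t ∪ Ico (t+1) n := by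
    ext x; simp [Finset.mem_Ico, Finset.mem_union]; omega
  have hdisj : Disjoint (range t) (Ico (t+1) n) := by
    rw [Finset.disjoint_left]; intro x hx hx'; simp at hx hx'; omega
  rw [hsplit, prod_union hdisj, prod_fall]
  have : ∏ q ∈ Ico (t+1) n, ((t:ℝ) - q) = ∏ i ∈ range (n-(t+1)), (-(1:ℝ) - i) := by
    rw [Finset.prod_Ico_eq_prod_range]
    refine prod_congr rfl fun q hq => ?_
    push_cast; ring
  rw [this, prod_fall_neg, show n - (t+1) = n-1-t from by omega]
  ring

lemma num_full (r : ℕ) : ∏ q ∈ range (2*r), ((r:ℝ) - 1/2 - q)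
    = (-1)^r * ((2*r)! / (4^r * r !))^2 := by
  conv_lhs => rw [show 2*r = r + r from by ring]
  rw [prod_range_add, prod_pos_half]
  have h2 : ∀ q ∈ range r, ((r:ℝ)-1/2-((r+q:ℕ):ℝ)) = -(1:ℝ)/2 - q := by
    intro q _; push_cast; ring
  rw [prod_congr rfl h2, prod_neg_half]
  ring

lemma num_stencil (r k : ℕ) (hk : k < r) : ∏ q ∈ range (r+1), ((r:ℝ) - k - 1/2 - q)
    = ((2*(r-k))! / (4^(r-k) * (r-k)!)) * ((-1)^(k+1) * ((2*(k+1))! / (4^(k+1) * (k+1)!))) := by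
  conv_lhs => rw [show r+1 = (r-k) + (k+1) from by omega]
  rw [prod_range_add]
  have h1 : ∀ q ∈ range (r-k), ((r:ℝ)-k-1/2-q) = (((r-k:ℕ)):ℝ)-1/2-q := by
    intro q _; push_cast [Nat.cast_sub hk.le]; try ring
  have h2 : ∀ q ∈ range (k+1), ((r:ℝ)-k-1/2-((r-k+q:ℕ):ℝ)) = -(1:ℝ)/2 - q := by
    intro q _; push_cast [Nat.cast_sub hk.le]; try ring
  rw [prod_congr rfl h1, prod_pos_half, prod_congr rfl h2, prod_neg_half]

noncomputable def K (r t : ℕ) : ℝ :=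
  (-1)^(r+t+1) * (2*r)! / (2^(4*r-1) * ((r-1)! * (r ! * ((r:ℝ) - 1/2 - t))))

lemma ell_eq (r t : ℕ) (hr : 1 ≤ r) (ht : t < 2*r) :
    ∏ q ∈ (range (2*r)).erase t, (((r:ℝ) - 1/2 - q) / ((t:ℝ) - q))
      = K r t * ((2*r-1).choose t : ℝ) := by
  obtain ⟨s, hs⟩ : ∃ s, 2*r = t+s+1 := ⟨2*r-t-1, by omega⟩
  rw [prod_div_distrib]
  have hX := half_ne r t
  have h1 : ∏ q ∈ (range (2*r)).erase t, ((r:ℝ) - 1/2 - q)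
      = ((-1)^r * ((2*r)! / (4^r * r !))^2) / ((r:ℝ)-1/2-t) := by
    rw [eq_div_iff hX, mul_comm]
    exact (Finset.mul_prod_erase _ (fun q : ℕ => (r:ℝ) - 1/2 - q) (mem_range.mpr ht)).trans
      (num_full r)
  rw [h1, prod_erase_denom (2*r) t ht, Nat.cast_choose ℝ (show t ≤ 2*r-1 by omega)]
  simp only [show 2*r-1-t = s from by omega]
  unfold K
  have hf : ((2*r)! : ℝ) = (2*r) * ((2*r-1)! : ℕ) := by
    have h := Nat.factorial_succ (2*r-1)
    rw [show 2*r-1+1 = 2*r from by omega] at h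
    exact_mod_cast h
  have hrf : ((r)! : ℝ) = r * ((r-1)! : ℕ) := by
    have h := Nat.factorial_succ (r-1)
    rw [show r-1+1 = r from by omega] at h
    exact_mod_cast h
  have h4 : (4:ℝ)^r = (2^r)^2 := by rw [← pow_mul, mul_comm r 2, pow_mul]; norm_num
  have hp : (2:ℝ)^(4*r-1) = (2^r)^4 / 2 := by
    rw [eq_div_iff (two_ne_zero), ← pow_mul, ← pow_succ, show 4*r-1+1 = r*4 from by omega]
  have hsgn : (-1:ℝ)^(r+t+1) = (-1)^r * (-1)^s := by
    rw [← pow_add]; exact sign_congr _ _ (by omega)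
  rw [hf, hrf, h4, hp, hsgn]
  set X := (r:ℝ) - 1/2 - t with hXdef
  set P := (2:ℝ)^r with hPdef
  set b := ((2*r-1)! : ℝ) with hbdef
  set c1 := ((r-1)! : ℝ) with hc1def
  set tF := ((t)! : ℝ) with htfdef
  set sF := ((s)! : ℝ) with hsfdef
  have hb : ((2*r-1)! : ℝ) ≠ 0 := by exact_mod_cast (Nat.factorial_pos _).ne'
  have hc1 : ((r-1)! : ℝ) ≠ 0 := by exact_mod_cast (Nat.factorial_pos _).ne'
  have htf : ((t)! : ℝ) ≠ 0 := by exact_mod_cast (Nat.factorial_pos _).ne'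
  have hsf : ((s)! : ℝ) ≠ 0 := by exact_mod_cast (Nat.factorial_pos _).ne'
  have hP : (2:ℝ)^r ≠ 0 := by positivity
  have hrr : (r:ℝ) ≠ 0 := by exact_mod_cast (by omega : r ≠ 0)
  rcases negs r with hd | hd <;> rcases negs s with he | he <;> rw [hd, he] <;>
    field_simp <;> ring


set_option maxHeartbeats 1200000 in
lemma term_eq (r k t : ℕ) (hk : k < r) (ha : k ≤ t) (hb : t ≤ k + r) :
    Copt r k * ∏ q ∈ (range (r+1)).erase (t-k),
        (((r:ℝ) - k - 1/2 - q) / (((t-k : ℕ) : ℝ) - q))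
      = K r t * ((r-1).choose k : ℝ) * (r.choose (t-k) : ℝ) := by
  obtain ⟨u, rfl⟩ : ∃ u, t = k + u := ⟨t-k, by omega⟩
  obtain ⟨d, rfl⟩ : ∃ d, r = k + d + 1 := ⟨r-k-1, by omega⟩
  obtain ⟨s2, hs2⟩ : ∃ s2, u + s2 = k + d + 1 := ⟨k+d+1-u, by omega⟩
  simp only [Nat.add_sub_cancel_left]
  have hu : u < (k+d+1) + 1 := by omega
  have hX' : ((k+d+1:ℕ):ℝ) - k - 1/2 - u ≠ 0 := by
    have h0 := half_ne (d+1) u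
    intro hc; apply h0; push_cast at hc ⊢; linarith
  rw [prod_div_distrib]
  have hnum : ∏ q ∈ (range ((k+d+1)+1)).erase u, (((k+d+1:ℕ):ℝ) - k - 1/2 - q)
      = (((2*((k+d+1)-k))! / (4^((k+d+1)-k) * ((k+d+1)-k)!))
          * ((-1)^(k+1) * ((2*(k+1))! / (4^(k+1) * (k+1)!)))) / (((k+d+1:ℕ):ℝ) - k - 1/2 - u) := by
    rw [eq_div_iff hX', mul_comm]
    exact (Finset.mul_prod_erase _ (fun q : ℕ => ((k+d+1:ℕ):ℝ) - k - 1/2 - q)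
      (mem_range.mpr hu)).trans (num_stencil (k+d+1) k hk)
  rw [hnum, prod_erase_denom ((k+d+1)+1) u hu]
  simp only [show (k+d+1)+1-1-u = s2 from by omega, show (k+d+1)-k = d+1 from by omega,
    show (k+d+1)-1 = k+d from by omega]
  unfold Copt K
  rw [Nat.cast_choose ℝ (show 2*k+1 ≤ 2*(k+d+1) from by omega),
    Nat.cast_choose ℝ (show k ≤ k+d from by omega),
    Nat.cast_choose ℝ (show u ≤ k+d+1 from by omega)]
  simp only [show 2*(k+d+1) - (2*k+1) = 2*d+1 from by omega,
    show k+d-k = d from by omega, show k+d+1-u = s2 from by omega,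
    show (k+d+1)+(k+u)+1 = 2*k+d+u+2 from by omega]
  have hf1 : ((2*(d+1))! : ℝ) = (2*d+2) * ((2*d+1)! : ℕ) := by
    have h := Nat.factorial_succ (2*d+1)
    rw [show 2*d+1+1 = 2*(d+1) from by omega] at h
    exact_mod_cast h
  have hf2 : ((2*(k+1))! : ℝ) = (2*k+2) * ((2*k+1)! : ℕ) := by
    have h := Nat.factorial_succ (2*k+1)
    rw [show 2*k+1+1 = 2*(k+1) from by omega] at h
    exact_mod_cast h
  have hf3 : ((d+1)! : ℝ) = (d+1) * (d ! : ℕ) := by exact_mod_cast Nat.factorial_succ d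
  have hf4 : ((k+1)! : ℝ) = (k+1) * (k ! : ℕ) := by exact_mod_cast Nat.factorial_succ k
  have hf5 : ((k+d+1)! : ℝ) = (k+d+1) * ((k+d)! : ℕ) := by
    exact_mod_cast Nat.factorial_succ (k+d)
  have hp1 : (4:ℝ)^(d+1) = ((2:ℝ)^d)^2*4 := by
    rw [show (4:ℝ) = 2^2 from by norm_num, ← pow_mul, show 2*(d+1) = d*2+2 from by ring,
      pow_add, pow_mul]
  have hp2 : (4:ℝ)^(k+1) = ((2:ℝ)^k)^2*4 := by
    rw [show (4:ℝ) = 2^2 from by norm_num, ← pow_mul, show 2*(k+1) = k*2+2 from by ring,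
      pow_add, pow_mul]
  have hp3 : (2:ℝ)^(2*(k+d+1)-1) = ((2:ℝ)^k)^2*((2:ℝ)^d)^2*2 := by
    rw [show 2*(k+d+1)-1 = k*2+(d*2+1) from by omega, pow_add, pow_add, pow_mul, pow_mul]
    ring
  have hp4 : (2:ℝ)^(4*(k+d+1)-1) = ((2:ℝ)^k)^4*((2:ℝ)^d)^4*8 := by
    rw [show 4*(k+d+1)-1 = k*4+(d*4+3) from by omega, pow_add, pow_add, pow_mul, pow_mul]
    ring
  have hsgn : (-1:ℝ)^(2*k+d+u+2) = (-1)^(k+1) * (-1)^s2 := by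
    rw [← pow_add]; exact sign_congr _ _ (by omega)
  have hXX : ((k+d+1:ℕ):ℝ) - 1/2 - ((k+u:ℕ):ℝ) = ((k+d+1:ℕ):ℝ) - ↑k - 1/2 - ↑u := by
    push_cast; ring
  rw [hf1, hf2, hf5, hp1, hp2, hp3, hp4, hsgn, hf3, hf4, hXX]
  set A := (2:ℝ)^k with hA
  set B := (2:ℝ)^d with hB
  set X := ((k+d+1:ℕ):ℝ) - (k:ℝ) - 1/2 - (u:ℝ) with hX
  set F0 := (((2*(k+d+1))! : ℕ) : ℝ) with hF0
  set F1 := (((2*d+1)! : ℕ) : ℝ) with hF1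
  set F2 := (((2*k+1)! : ℕ) : ℝ) with hF2
  set F3 := ((d ! : ℕ) : ℝ) with hF3
  set F4 := ((k ! : ℕ) : ℝ) with hF4
  set F5 := (((k+d)! : ℕ) : ℝ) with hF5
  set F6 := ((u ! : ℕ) : ℝ) with hF6
  set F7 := ((s2 ! : ℕ) : ℝ) with hF7
  have ne1 : ((2*d+1)! : ℝ) ≠ 0 := by exact_mod_cast (Nat.factorial_pos _).ne'
  have ne2 : ((2*k+1)! : ℝ) ≠ 0 := by exact_mod_cast (Nat.factorial_pos _).ne'
  have ne3 : ((d)! : ℝ) ≠ 0 := by exact_mod_cast (Nat.factorial_pos _).ne'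
  have ne4 : ((k)! : ℝ) ≠ 0 := by exact_mod_cast (Nat.factorial_pos _).ne'
  have ne5 : ((k+d)! : ℝ) ≠ 0 := by exact_mod_cast (Nat.factorial_pos _).ne'
  have ne6 : ((u)! : ℝ) ≠ 0 := by exact_mod_cast (Nat.factorial_pos _).ne'
  have ne7 : ((s2)! : ℝ) ≠ 0 := by exact_mod_cast (Nat.factorial_pos _).ne'
  have ne8 : ((2*(k+d+1))! : ℝ) ≠ 0 := by exact_mod_cast (Nat.factorial_pos _).ne'
  have hAne : A ≠ 0 := by rw [hA]; positivity
  have hBne : B ≠ 0 := by rw [hB]; positivity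
  have ne0' : F0 ≠ 0 := ne8
  have ne1' : F1 ≠ 0 := ne1
  have ne2' : F2 ≠ 0 := ne2
  have ne3' : F3 ≠ 0 := ne3
  have ne4' : F4 ≠ 0 := ne4
  have ne5' : F5 ≠ 0 := ne5
  have ne6' : F6 ≠ 0 := ne6
  have ne7' : F7 ≠ 0 := ne7
  push_cast
  rcases negs (k+1) with hd1 | hd1 <;> rcases negs s2 with he1 | he1 <;> rw [hd1, he1] <;>
    field_simp <;> ring

lemma vander (r t : ℕ) (hr : 1 ≤ r) :
    ∑ k ∈ range r, (r-1).choose k * (if k ≤ t then r.choose (t-k) else 0)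
      = (2*r-1).choose t := by
  have h := Nat.add_choose_eq (r-1) r t
  rw [show r-1+r = 2*r-1 from by omega] at h
  rw [h, Finset.Nat.sum_antidiagonal_eq_sum_range_succ_mk]
  have e1 : ∑ k ∈ range r, (r-1).choose k * (if k ≤ t then r.choose (t-k) else 0)
      = ∑ k ∈ range (r+t+1), (r-1).choose k * (if k ≤ t then r.choose (t-k) else 0) := by
    apply Finset.sum_subset (Finset.range_subset_range.mpr (by omega))
    intro x hx hnx
    rw [mem_range, not_lt] at hnx
    rw [Nat.choose_eq_zero_of_lt (by omega), zero_mul]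
  have e2 : ∑ k ∈ range (t+1), (r-1).choose k * r.choose (t-k)
      = ∑ k ∈ range (r+t+1), (r-1).choose k * (if k ≤ t then r.choose (t-k) else 0) := by
    rw [Finset.sum_congr rfl (g := fun k => (r-1).choose k * (if k ≤ t then r.choose (t-k) else 0))
      (fun k hk => by rw [if_pos (show k ≤ t from by rw [mem_range] at hk; omega)])]
    apply Finset.sum_subset (Finset.range_subset_range.mpr (by omega))
    intro x hx hnx
    rw [mem_range, not_lt] at hnx
    rw [if_neg (by omega), mul_zero]
  rw [e1, e2]

lemma key (r t : ℕ) (hr : 1 ≤ r) (ht : t < 2*r) :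
    ∏ q ∈ (range (2*r)).erase t, (((r:ℝ) - 1/2 - q) / ((t:ℝ) - q))
      = ∑ k ∈ range r, Copt r k *
          (if k ≤ t ∧ t ≤ k + r then
            ∏ q ∈ (range (r+1)).erase (t-k), (((r:ℝ) - k - 1/2 - q) / (((t-k:ℕ):ℝ) - q))
          else 0) := by
  rw [ell_eq r t hr ht]
  have hterm : ∀ k ∈ range r, (Copt r k *
      (if k ≤ t ∧ t ≤ k + r then
        ∏ q ∈ (range (r+1)).erase (t-k), (((r:ℝ) - k - 1/2 - q) / (((t-k:ℕ):ℝ) - q))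
      else 0))
      = K r t * ((((r-1).choose k * (if k ≤ t then r.choose (t-k) else 0) : ℕ)) : ℝ) := by
    intro k hk
    rw [mem_range] at hk
    by_cases h1 : k ≤ t
    · by_cases h2 : t ≤ k + r
      · rw [if_pos ⟨h1, h2⟩, if_pos h1, term_eq r k t hk h1 h2]
        push_cast
        ring
      · rw [if_neg (by tauto), if_pos h1,
          Nat.choose_eq_zero_of_lt (show r < t - k from by omega)]
        simp
    · rw [if_neg (by tauto), if_neg h1]
      simp
  rw [Finset.sum_congr rfl hterm, ← Finset.mul_sum, ← Nat.cast_sum, vander r t hr, mul_comm]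


lemma sum_split (n : ℕ) (f : ℕ → ℤ) :
    ∑ i ∈ range (2*n), f i = (∑ k ∈ range n, f (2*k)) + ∑ k ∈ range n, f (2*k+1) := by
  induction n with
  | zero => simp
  | succ m ih =>
    rw [show 2*(m+1) = (2*m+1)+1 from by ring, Finset.sum_range_succ, Finset.sum_range_succ,
      ih, Finset.sum_range_succ, Finset.sum_range_succ, show 2*m+1 = 2*m+1 from rfl]
    ring

def emb (c : ℤ) : ℕ ↪ ℤ := ⟨fun p => c + (p:ℤ), fun a b hab => by simpa using hab⟩

lemma Icc_int_eq_map (c : ℤ) (A : ℕ) :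
    Finset.Icc c (c + A) = (Finset.range (A+1)).map (emb c) := by
  ext n
  simp only [Finset.mem_Icc, Finset.mem_map, Finset.mem_range, emb,
    Function.Embedding.coeFn_mk]
  constructor
  · rintro ⟨h1, h2⟩; exact ⟨(n - c).toNat, by omega, by show c + ((n - c).toNat : ℤ) = n; omega⟩
  · rintro ⟨p, hp, rfl⟩; show c ≤ c + (p:ℤ) ∧ c + (p:ℤ) ≤ c + (A:ℤ); omega

lemma Pval_formula (h x₀ : ℝ) (hh : h ≠ 0) (j b : ℤ) (A : ℕ) (f : ℝ → ℝ) :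
    Pval h x₀ j (A:ℤ) b f = ∑ p ∈ range (A+1),
      f (x₀ + ((j + b - (A:ℤ) + (p:ℤ) : ℤ) : ℝ) * h) *
        ∏ q ∈ (range (A+1)).erase p,
          (((j:ℝ) - 1/2 - ((j + b - (A:ℤ) + (q:ℤ) : ℤ) : ℝ)) / ((p:ℝ) - (q:ℝ))) := by
  unfold Pval
  rw [Lagrange.interpolate_apply, Polynomial.eval_finset_sum]
  have hIcc : Finset.Icc (j + b - (A:ℤ)) (j + b) = (range (A+1)).map (emb (j + b - (A:ℤ))) := by
    have h0 := Icc_int_eq_map (j + b - (A:ℤ)) A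
    rwa [show j + b - (A:ℤ) + (A:ℤ) = j + b from by ring] at h0
  rw [hIcc, Finset.sum_map]
  apply Finset.sum_congr rfl
  intro p hp
  rw [Polynomial.eval_mul, Polynomial.eval_C]
  have hemb : ∀ q : ℕ, emb (j + b - (A:ℤ)) q = j + b - (A:ℤ) + (q:ℤ) := fun q => rfl
  congr 1
  unfold Lagrange.basis
  rw [← Finset.map_erase, Finset.prod_map, Polynomial.eval_prod]
  apply Finset.prod_congr rfl
  intro q hq
  have hq' : q ≠ p := (Finset.mem_erase.mp hq).1
  have hpq : (p:ℝ) - (q:ℝ) ≠ 0 := by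
    have : (p:ℝ) ≠ (q:ℝ) := by exact_mod_cast fun hc => hq' (by exact_mod_cast hc.symm)
    exact sub_ne_zero.mpr this
  rw [hemb, hemb]
  unfold Lagrange.basisDivisor
  simp only [Polynomial.eval_mul, Polynomial.eval_C, Polynomial.eval_sub, Polynomial.eval_X]
  have h1 : (x₀ + ((j + b - (A:ℤ) + (p:ℤ) : ℤ):ℝ) * h) - (x₀ + ((j + b - (A:ℤ) + (q:ℤ) : ℤ):ℝ) * h)
      = ((p:ℝ) - (q:ℝ)) * h := by push_cast; ring
  have h2 : (x₀ + ((j:ℝ) - 1/2) * h) - (x₀ + ((j + b - (A:ℤ) + (q:ℤ) : ℤ):ℝ) * h)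
      = (((j:ℝ) - 1/2 - ((j + b - (A:ℤ) + (q:ℤ) : ℤ) : ℝ))) * h := by push_cast; ring
  rw [h1, h2, inv_mul_eq_div, mul_div_mul_right _ _ hh]


lemma lhs_formula (h x₀ : ℝ) (hh : h ≠ 0) (j : ℤ) (r : ℕ) (hr : 1 ≤ r) (f : ℝ → ℝ) :
    Pval h x₀ j (2*(r:ℤ)-1) ((r:ℤ)-1) f
      = ∑ t ∈ range (2*r), f (x₀ + ((j - r + t : ℤ):ℝ) * h) *
          ∏ q ∈ (range (2*r)).erase t, (((r:ℝ) - 1/2 - q) / ((t:ℝ) - q)) := by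
  have hA : (2*(r:ℤ)-1) = ((2*r-1 : ℕ) : ℤ) := by
    push_cast [Nat.cast_sub (show 1 ≤ 2*r from by omega)]; ring
  rw [hA, Pval_formula h x₀ hh j ((r:ℤ)-1) (2*r-1) f, show (2*r-1)+1 = 2*r from by omega]
  apply Finset.sum_congr rfl
  intro t ht
  congr 1
  · rw [show j + ((r:ℤ)-1) - ((2*r-1:ℕ):ℤ) + (t:ℤ) = j - r + t from by omega]
  · apply Finset.prod_congr rfl
    intro q hq
    congr 1
    push_cast [Nat.cast_sub (show 1 ≤ 2*r from by omega)]
    ring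

lemma stencil_formula (h x₀ : ℝ) (hh : h ≠ 0) (j : ℤ) (r k : ℕ) (f : ℝ → ℝ) :
    Pval h x₀ j (r:ℤ) (k:ℤ) f
      = ∑ p ∈ range (r+1), f (x₀ + ((j - r + (k + p : ℕ) : ℤ):ℝ) * h) *
          ∏ q ∈ (range (r+1)).erase p, (((r:ℝ) - k - 1/2 - q) / ((p:ℝ) - q)) := by
  rw [Pval_formula h x₀ hh j (k:ℤ) r f]
  apply Finset.sum_congr rfl
  intro p hp
  congr 1
  · rw [show j + (k:ℤ) - (r:ℤ) + (p:ℤ) = j - r + ((k + p : ℕ) : ℤ) from by push_cast; ring]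
  · apply Finset.prod_congr rfl
    intro q hq
    congr 1
    push_cast
    ring

def embN (k : ℕ) : ℕ ↪ ℕ := ⟨fun p => k + p, add_right_injective k⟩

lemma shift_sum (r k : ℕ) (hk : k < r) (F : ℕ → ℝ) :
    ∑ p ∈ range (r+1), F p = ∑ t ∈ range (2*r), if k ≤ t ∧ t ≤ k + r then F (t - k) else 0 := by
  rw [← Finset.sum_filter]
  have hset : (range (2*r)).filter (fun t => k ≤ t ∧ t ≤ k+r) = (range (r+1)).map (embN k) := by
    ext x
    simp only [Finset.mem_filter, Finset.mem_range, Finset.mem_map, embN,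
      Function.Embedding.coeFn_mk]
    constructor
    · rintro ⟨h1, h2, h3⟩; exact ⟨x - k, by omega, by omega⟩
    · rintro ⟨p, hp, rfl⟩; omega
  rw [hset, Finset.sum_map]
  apply Finset.sum_congr rfl
  intro p hp
  have : embN k p - k = p := by simp [embN]
  rw [this]

end OW

open OW in
/-- Explicit optimal weights (Proposition 1): the degree `2r-1` interpolant at the midpoint is the
convex combination of the `r` degree-`r` interpolants with weights `C^{2r-1}_{r-1,k}`,
these weights are positive and sum to one. -/
theorem optimal_weights (h x₀ : ℝ) (hh : 0 < h) (j : ℤ) (r : ℕ) (hr : 1 ≤ r) :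
    (∀ f : ℝ → ℝ,
        Pval h x₀ j (2 * (r : ℤ) - 1) ((r : ℤ) - 1) f =
          ∑ k ∈ Finset.range r, Copt r k * Pval h x₀ j (r : ℤ) (k : ℤ) f) ∧
      (∀ k < r, 0 < Copt r k) ∧
      (∑ k ∈ Finset.range r, Copt r k) = 1 := by
  have hh' : h ≠ 0 := ne_of_gt hh
  refine ⟨?_, ?_, ?_⟩
  · intro f
    rw [lhs_formula h x₀ hh' j r hr f]
    have hst : ∀ k ∈ range r, Copt r k * Pval h x₀ j (r:ℤ) (k:ℤ) f
        = ∑ t ∈ range (2*r), f (x₀ + ((j - r + t : ℤ):ℝ) * h) *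
            (Copt r k * (if k ≤ t ∧ t ≤ k + r then
              ∏ q ∈ (range (r+1)).erase (t-k),
                (((r:ℝ) - k - 1/2 - q) / (((t-k:ℕ):ℝ) - q)) else 0)) := by
      intro k hk
      rw [mem_range] at hk
      rw [stencil_formula h x₀ hh' j r k f,
        shift_sum r k hk (fun p => f (x₀ + ((j - r + (k + p : ℕ) : ℤ):ℝ) * h) *
          ∏ q ∈ (range (r+1)).erase p, (((r:ℝ) - k - 1/2 - q) / ((p:ℝ) - q))),
        Finset.mul_sum]
      apply Finset.sum_congr rfl
      intro t ht
      by_cases hc : k ≤ t ∧ t ≤ k + r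
      · rw [if_pos hc, if_pos hc, show k + (t-k) = t from by omega]
        ring
      · rw [if_neg hc, if_neg hc]
        ring
    rw [Finset.sum_congr rfl hst, Finset.sum_comm]
    apply Finset.sum_congr rfl
    intro t ht
    rw [mem_range] at ht
    rw [← Finset.mul_sum, ← key r t hr ht]
  · intro k hk
    have hc : 0 < (2*r).choose (2*k+1) := Nat.choose_pos (by omega)
    have hc' : (0:ℝ) < ((2*r).choose (2*k+1) : ℝ) := by exact_mod_cast hc
    unfold Copt
    positivity
  · have hs : ∑ k ∈ range r, ((2*r).choose (2*k+1) : ℤ) = 2^(2*r-1) := by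
      have h1 : ∑ i ∈ range (2*r+1), ((2*r).choose i : ℤ) = 2^(2*r) := by
        exact_mod_cast congrArg (Nat.cast : ℕ → ℤ) (Nat.sum_range_choose (2*r))
      have h2 : ∑ i ∈ range (2*r+1), (-1:ℤ)^i * ((2*r).choose i : ℤ) = 0 :=
        Int.alternating_sum_range_choose_of_ne (show 2*r ≠ 0 from by omega)
      rw [Finset.sum_range_succ] at h1 h2
      rw [sum_split r] at h1
      rw [sum_split r] at h2
      have he : ∀ m : ℕ, ((-1:ℤ))^(2*m) = 1 := fun m => by rw [pow_mul]; norm_num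
      have ho : ∀ m : ℕ, ((-1:ℤ))^(2*m+1) = -1 := fun m => by rw [pow_succ, he]; norm_num
      simp only [he, ho, one_mul, Nat.choose_self, Nat.cast_one, mul_one, neg_one_mul,
        Finset.sum_neg_distrib] at h1 h2
      have hp : (2:ℤ)^(2*r) = 2 * 2^(2*r-1) := by
        conv_lhs => rw [show 2*r = (2*r-1)+1 from by omega]
        rw [pow_succ]; ring
      linarith
    have hsR : ∑ k ∈ range r, ((2*r).choose (2*k+1) : ℝ) = 2^(2*r-1) := by
      exact_mod_cast hs
    unfold Copt
    rw [← Finset.mul_sum, hsR, one_div, inv_mul_cancel₀ (by positivity)]
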